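/- Let n ≥ 2, λ > -n/2, μ a finite positive Borel measure on S^{n-1}, and u the P_λ-Poisson integral of μ. Then for every unit vector ζ and 0 ≤ r' ≤ r < 1, ((1-r)/(1-r'))^(2λ+1) · ((1+r')/(1+r))^(n-1) · u(r'ζ) ≤ u(rζ) ≤ ((1+r)/(1+r'))^(2λ+1) · ((1-r')/(1-r))^(n-1) · u(r'ζ). -/

import Mathlib

open Real MeasureTheory

lemma harnack_aux1 (l nR a b c d da db : ℝ) (hnl : 0 ≤ nR + 2*l)
    (ha : 0 < a) (hb : 0 < b) (hc : 0 < c) (hd : 0 < d) (hda : 0 < da) (hdb : 0 < db)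
    (hkey : b * da ≤ d * db) :
    (c/a)^(2*l+1) * (b/d)^(nR-1) * ((a*b)^(1+2*l) / db^(nR+2*l))
      ≤ (c*d)^(1+2*l) / da^(nR+2*l) := by
  rw [← Real.log_le_log_iff (by positivity) (by positivity)]
  have hlog : Real.log b + Real.log da ≤ Real.log d + Real.log db := by
    have h := Real.log_le_log (by positivity) hkey
    rwa [Real.log_mul hb.ne' hda.ne', Real.log_mul hd.ne' hdb.ne'] at h
  rw [Real.log_mul (by positivity) (by positivity),
      Real.log_mul (by positivity) (by positivity),
      Real.log_div (by positivity) (by positivity),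
      Real.log_div (by positivity) (by positivity),
      Real.log_rpow (by positivity), Real.log_rpow (by positivity),
      Real.log_rpow (by positivity), Real.log_rpow (by positivity),
      Real.log_rpow (by positivity), Real.log_rpow (by positivity),
      Real.log_div hc.ne' ha.ne', Real.log_div hb.ne' hd.ne',
      Real.log_mul ha.ne' hb.ne', Real.log_mul hc.ne' hd.ne']
  nlinarith [mul_nonneg hnl (sub_nonneg.2 hlog)]

lemma harnack_aux2 (l nR a b c d da db : ℝ) (hnl : 0 ≤ nR + 2*l)
    (ha : 0 < a) (hb : 0 < b) (hc : 0 < c) (hd : 0 < d) (hda : 0 < da) (hdb : 0 < db)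
    (hkey : c * db ≤ a * da) :
    (c*d)^(1+2*l) / da^(nR+2*l)
      ≤ (d/b)^(2*l+1) * (a/c)^(nR-1) * ((a*b)^(1+2*l) / db^(nR+2*l)) := by
  rw [← Real.log_le_log_iff (by positivity) (by positivity)]
  have hlog : Real.log c + Real.log db ≤ Real.log a + Real.log da := by
    have h := Real.log_le_log (by positivity) hkey
    rwa [Real.log_mul hc.ne' hdb.ne', Real.log_mul ha.ne' hda.ne'] at h
  rw [Real.log_mul (by positivity) (by positivity),
      Real.log_mul (by positivity) (by positivity),
      Real.log_div (by positivity) (by positivity),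
      Real.log_div (by positivity) (by positivity),
      Real.log_rpow (by positivity), Real.log_rpow (by positivity),
      Real.log_rpow (by positivity), Real.log_rpow (by positivity),
      Real.log_rpow (by positivity), Real.log_rpow (by positivity),
      Real.log_div hd.ne' hb.ne', Real.log_div ha.ne' hc.ne',
      Real.log_mul ha.ne' hb.ne', Real.log_mul hc.ne' hd.ne']
  nlinarith [mul_nonneg hnl (sub_nonneg.2 hlog)]

set_option maxHeartbeats 1000000 in
theorem stmt13 (n : ℕ) (hn : 2 ≤ n) (l : ℝ) (hl : -(n / 2 : ℝ) < l)
    (μ : MeasureTheory.Measure (Metric.sphere (0 : EuclideanSpace ℝ (Fin n)) 1))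
    [MeasureTheory.IsFiniteMeasure μ]
    (u : EuclideanSpace ℝ (Fin n) → ℝ)
    (hu : ∀ x, ‖x‖ < 1 →
      u x = ∫ ξ, (1 - ‖x‖ ^ 2) ^ (1 + 2 * l) / ‖x - (ξ : EuclideanSpace ℝ (Fin n))‖ ^ ((n : ℝ) + 2 * l) ∂μ)
    (ζ : EuclideanSpace ℝ (Fin n)) (hζ : ‖ζ‖ = 1)
    (r' r : ℝ) (h0 : 0 ≤ r') (h1 : r' ≤ r) (h2 : r < 1) :
    ((1 - r) / (1 - r')) ^ (2 * l + 1) * ((1 + r') / (1 + r)) ^ ((n : ℝ) - 1) * u (r' • ζ) ≤ u (r • ζ) ∧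
      u (r • ζ) ≤ ((1 + r) / (1 + r')) ^ (2 * l + 1) * ((1 - r') / (1 - r)) ^ ((n : ℝ) - 1) * u (r' • ζ) := by
  have h0r : 0 ≤ r := h0.trans h1
  have h2' : r' < 1 := lt_of_le_of_lt h1 h2
  have hnl : (0:ℝ) ≤ (n:ℝ) + 2 * l := by
    have : (2:ℝ) * (-(n/2 : ℝ)) ≤ 2 * l := by linarith
    linarith
  have hc : (0:ℝ) < 1 - r := by linarith
  have ha : (0:ℝ) < 1 - r' := by linarith
  have hd : (0:ℝ) < 1 + r := by linarith
  have hb : (0:ℝ) < 1 + r' := by linarith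
  have hnr : ‖r • ζ‖ = r := by
    rw [norm_smul, hζ, mul_one, Real.norm_eq_abs, abs_of_nonneg h0r]
  have hnr' : ‖r' • ζ‖ = r' := by
    rw [norm_smul, hζ, mul_one, Real.norm_eq_abs, abs_of_nonneg h0]
  -- distance facts for each ξ on the sphere
  have hda_pos : ∀ ξ : Metric.sphere (0:EuclideanSpace ℝ (Fin n)) 1, 1 - r ≤ ‖r • ζ - (ξ:EuclideanSpace ℝ (Fin n))‖ := by
    intro ξ
    have h := norm_sub_norm_le (ξ:EuclideanSpace ℝ (Fin n)) (r • ζ)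
    rw [norm_eq_of_mem_sphere ξ, hnr, ← norm_sub_rev] at h
    exact h
  have hdb_pos : ∀ ξ : Metric.sphere (0:EuclideanSpace ℝ (Fin n)) 1, 1 - r' ≤ ‖r' • ζ - (ξ:EuclideanSpace ℝ (Fin n))‖ := by
    intro ξ
    have h := norm_sub_norm_le (ξ:EuclideanSpace ℝ (Fin n)) (r' • ζ)
    rw [norm_eq_of_mem_sphere ξ, hnr', ← norm_sub_rev] at h
    exact h
  -- key geometric inequalities
  have hkey : ∀ ξ : Metric.sphere (0:EuclideanSpace ℝ (Fin n)) 1,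
      (1 + r') * ‖r • ζ - (ξ:EuclideanSpace ℝ (Fin n))‖ ≤ (1 + r) * ‖r' • ζ - (ξ:EuclideanSpace ℝ (Fin n))‖ ∧
      (1 - r) * ‖r' • ζ - (ξ:EuclideanSpace ℝ (Fin n))‖ ≤ (1 - r') * ‖r • ζ - (ξ:EuclideanSpace ℝ (Fin n))‖ := by
    intro ξ
    set da := ‖r • ζ - (ξ:EuclideanSpace ℝ (Fin n))‖ with hda_def
    set db := ‖r' • ζ - (ξ:EuclideanSpace ℝ (Fin n))‖ with hdb_def
    have hda0 : 0 ≤ da := norm_nonneg _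
    have hdb0 : 0 ≤ db := norm_nonneg _
    set t := (inner ℝ ζ (ξ:EuclideanSpace ℝ (Fin n)) : ℝ) with ht_def
    have ht : |t| ≤ 1 := by
      have h := abs_real_inner_le_norm ζ (ξ:EuclideanSpace ℝ (Fin n))
      rwa [hζ, norm_eq_of_mem_sphere ξ, one_mul] at h
    have ht1 : -1 ≤ t := neg_le_of_abs_le ht
    have ht2 : t ≤ 1 := le_of_abs_le ht
    have hda2 : da^2 = r^2 - 2*(r*t) + 1 := by
      rw [hda_def, @norm_sub_sq_real, real_inner_smul_left, hnr, norm_eq_of_mem_sphere ξ]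
      ring
    have hdb2 : db^2 = r'^2 - 2*(r'*t) + 1 := by
      rw [hdb_def, @norm_sub_sq_real, real_inner_smul_left, hnr', norm_eq_of_mem_sphere ξ]
      ring
    have hrr' : 0 ≤ 1 - r * r' := by nlinarith
    constructor
    · have hsq : ((1 + r') * da)^2 ≤ ((1 + r) * db)^2 := by
        have hprod : 0 ≤ (1 + t) * ((r - r') * (1 - r * r')) := by
          apply mul_nonneg (by linarith)
          exact mul_nonneg (by linarith) hrr'
        nlinarith [hda2, hdb2, hprod]
      calc (1 + r') * da = √(((1 + r') * da)^2) := (Real.sqrt_sq (by positivity)).symm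
        _ ≤ √(((1 + r) * db)^2) := Real.sqrt_le_sqrt hsq
        _ = (1 + r) * db := Real.sqrt_sq (by positivity)
    · have hsq : ((1 - r) * db)^2 ≤ ((1 - r') * da)^2 := by
        have hprod : 0 ≤ (1 - t) * ((r - r') * (1 - r * r')) := by
          apply mul_nonneg (by linarith)
          exact mul_nonneg (by linarith) hrr'
        nlinarith [hda2, hdb2, hprod]
      calc (1 - r) * db = √(((1 - r) * db)^2) := (Real.sqrt_sq (by positivity)).symm
        _ ≤ √(((1 - r') * da)^2) := Real.sqrt_le_sqrt hsq
        _ = (1 - r') * da := Real.sqrt_sq (by positivity)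
  -- kernel functions
  set f : Metric.sphere (0:EuclideanSpace ℝ (Fin n)) 1 → ℝ :=
    fun ξ => (1 - r^2) ^ (1 + 2*l) / ‖r • ζ - (ξ:EuclideanSpace ℝ (Fin n))‖ ^ ((n:ℝ) + 2*l) with hf_def
  set g : Metric.sphere (0:EuclideanSpace ℝ (Fin n)) 1 → ℝ :=
    fun ξ => (1 - r'^2) ^ (1 + 2*l) / ‖r' • ζ - (ξ:EuclideanSpace ℝ (Fin n))‖ ^ ((n:ℝ) + 2*l) with hg_def
  have huf : u (r • ζ) = ∫ ξ, f ξ ∂μ := by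
    rw [hu (r • ζ) (by rw [hnr]; exact h2)]
    simp only [hf_def, hnr]
  have hug : u (r' • ζ) = ∫ ξ, g ξ ∂μ := by
    rw [hu (r' • ζ) (by rw [hnr']; exact h2')]
    simp only [hg_def, hnr']
  -- continuity and integrability
  have hcf : Continuous f := by
    apply Continuous.div continuous_const
    · exact (Continuous.norm (continuous_const.sub continuous_subtype_val)).rpow_const
        (fun ξ => Or.inr hnl)
    · intro ξ
      have : 0 < ‖r • ζ - (ξ:EuclideanSpace ℝ (Fin n))‖ := lt_of_lt_of_le hc (hda_pos ξ)
      positivity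
  have hcg : Continuous g := by
    apply Continuous.div continuous_const
    · exact (Continuous.norm (continuous_const.sub continuous_subtype_val)).rpow_const
        (fun ξ => Or.inr hnl)
    · intro ξ
      have : 0 < ‖r' • ζ - (ξ:EuclideanSpace ℝ (Fin n))‖ := lt_of_lt_of_le ha (hdb_pos ξ)
      positivity
  have hif : Integrable f μ := hcf.integrable_of_hasCompactSupport (HasCompactSupport.of_compactSpace f)
  have hig : Integrable g μ := hcg.integrable_of_hasCompactSupport (HasCompactSupport.of_compactSpace g)
  -- pointwise inequalities
  have hpw1 : ∀ ξ, ((1 - r) / (1 - r')) ^ (2 * l + 1) * ((1 + r') / (1 + r)) ^ ((n : ℝ) - 1) * g ξ ≤ f ξ := by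
    intro ξ
    have hda : 0 < ‖r • ζ - (ξ:EuclideanSpace ℝ (Fin n))‖ := lt_of_lt_of_le hc (hda_pos ξ)
    have hdb : 0 < ‖r' • ζ - (ξ:EuclideanSpace ℝ (Fin n))‖ := lt_of_lt_of_le ha (hdb_pos ξ)
    have h := harnack_aux1 l (n:ℝ) (1-r') (1+r') (1-r) (1+r) ‖r • ζ - (ξ:EuclideanSpace ℝ (Fin n))‖ ‖r' • ζ - (ξ:EuclideanSpace ℝ (Fin n))‖
      hnl ha hb hc hd hda hdb (hkey ξ).1
    have e1 : (1 : ℝ) - r^2 = (1-r)*(1+r) := by ring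
    have e2 : (1 : ℝ) - r'^2 = (1-r')*(1+r') := by ring
    simp only [hf_def, hg_def, e1, e2]
    exact h
  have hpw2 : ∀ ξ, f ξ ≤ ((1 + r) / (1 + r')) ^ (2 * l + 1) * ((1 - r') / (1 - r)) ^ ((n : ℝ) - 1) * g ξ := by
    intro ξ
    have hda : 0 < ‖r • ζ - (ξ:EuclideanSpace ℝ (Fin n))‖ := lt_of_lt_of_le hc (hda_pos ξ)
    have hdb : 0 < ‖r' • ζ - (ξ:EuclideanSpace ℝ (Fin n))‖ := lt_of_lt_of_le ha (hdb_pos ξ)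
    have h := harnack_aux2 l (n:ℝ) (1-r') (1+r') (1-r) (1+r) ‖r • ζ - (ξ:EuclideanSpace ℝ (Fin n))‖ ‖r' • ζ - (ξ:EuclideanSpace ℝ (Fin n))‖
      hnl ha hb hc hd hda hdb (hkey ξ).2
    have e1 : (1 : ℝ) - r^2 = (1-r)*(1+r) := by ring
    have e2 : (1 : ℝ) - r'^2 = (1-r')*(1+r') := by ring
    simp only [hf_def, hg_def, e1, e2]
    exact h
  rw [huf, hug]
  constructor
  · rw [← MeasureTheory.integral_const_mul]
    exact integral_mono (hig.const_mul _) hif hpw1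
  · rw [← MeasureTheory.integral_const_mul]
    exact integral_mono hif (hig.const_mul _) hpw2
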